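/- Let f_1,…,f_n : ℝ^d → ℝ be convex and L-smooth, let f := (1/n)∑_i f_i, and let x* ∈ ℝ^d satisfy ∑_{i=1}^n ∇f_i(x*) = 0 (i.e. x* is a stationary point of f). Then for every x ∈ ℝ^d: ∑_{i=1}^n ‖∇f_i(x) − ∇f_i(x*)‖² ≤ 2 L n (f(x) − f(x*)). -/

import Mathlib

open Set RealInnerProductSpace

section Aux

variable {E : Type*} [NormedAddCommGroup E] [InnerProductSpace ℝ E] [CompleteSpace E]

private lemma hasDerivAt_comp_line (g : E → ℝ) (hg : Differentiable ℝ g) (x v : E) (t : ℝ) :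
    HasDerivAt (fun s : ℝ => g (x + s • v)) ⟪gradient g (x + t • v), v⟫ t := by
  have hc : HasDerivAt (fun s : ℝ => x + s • v) v t := by
    simpa using ((hasDerivAt_id t).smul_const v).const_add x
  have h2 := ((hg (x + t • v)).hasGradientAt).hasFDerivAt
  have h3 := h2.comp_hasDerivAt t hc
  simpa [InnerProductSpace.toDual_apply_apply, Function.comp_def] using h3

private lemma convex_first_order (g : E → ℝ) (hconv : ConvexOn ℝ univ g)
    (hg : Differentiable ℝ g) (x y : E) :
    g y + ⟪gradient g y, x - y⟫ ≤ g x := by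
  set φ : ℝ → ℝ := fun t => g (y + t • (x - y)) with hφ
  have hφd : ∀ t : ℝ, HasDerivAt φ ⟪gradient g (y + t • (x - y)), x - y⟫ t :=
    fun t => hasDerivAt_comp_line g hg y (x - y) t
  have hφconv : ConvexOn ℝ univ φ := by
    have h := hconv.comp_affineMap (AffineMap.lineMap y x : ℝ →ᵃ[ℝ] E)
    have heq : φ = g ∘ (AffineMap.lineMap y x : ℝ →ᵃ[ℝ] E) := by
      funext t
      simp [hφ, AffineMap.lineMap_apply, add_comm]
    rw [heq]
    simpa using h
  have h := hφconv.le_slope_of_hasDerivAt (mem_univ (0 : ℝ)) (mem_univ (1 : ℝ)) one_pos (hφd 0)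
  have hs : slope φ 0 1 = φ 1 - φ 0 := by simp [slope_def_field]
  rw [hs] at h
  have h0 : φ 0 = g y := by simp [hφ]
  have h1 : φ 1 = g x := by simp [hφ]
  have h2 : gradient g (y + (0 : ℝ) • (x - y)) = gradient g y := by simp
  rw [h0, h1, h2] at h
  linarith

private lemma descent_lemma (g : E → ℝ) {L : ℝ} (hg : Differentiable ℝ g)
    (hL : ∀ x y, ‖gradient g x - gradient g y‖ ≤ L * ‖x - y‖) (x v : E) :
    g (x + v) ≤ g x + ⟪gradient g x, v⟫ + L / 2 * ‖v‖ ^ 2 := by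
  set φ : ℝ → ℝ := fun t =>
    g (x + t • v) - t * ⟪gradient g x, v⟫ - L * t ^ 2 / 2 * ‖v‖ ^ 2 with hφ
  have hφd : ∀ t : ℝ, HasDerivAt φ
      (⟪gradient g (x + t • v), v⟫ - ⟪gradient g x, v⟫ - L * t * ‖v‖ ^ 2) t := by
    intro t
    have h := ((hasDerivAt_comp_line g hg x v t).sub
        ((hasDerivAt_id t).mul_const ⟪gradient g x, v⟫)).sub
        ((((hasDerivAt_pow 2 t).const_mul L).div_const 2).mul_const (‖v‖ ^ 2))
    simp only [id_eq, one_mul, pow_one, Nat.cast_ofNat] at h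
    convert h using 1
    · rfl
    · rfl
    · rfl
    ring
  have hdiff : Differentiable ℝ φ := fun t => (hφd t).differentiableAt
  have hmono : AntitoneOn φ (Icc (0 : ℝ) 1) := by
    apply antitoneOn_of_deriv_nonpos (convex_Icc 0 1) hdiff.continuous.continuousOn
      (fun t _ => (hdiff t).differentiableWithinAt)
    intro t ht
    rw [interior_Icc] at ht
    rw [(hφd t).deriv]
    have h1 : ⟪gradient g (x + t • v) - gradient g x, v⟫
        ≤ L * t * ‖v‖ ^ 2 := by
      calc ⟪gradient g (x + t • v) - gradient g x, v⟫
          ≤ ‖gradient g (x + t • v) - gradient g x‖ * ‖v‖ := real_inner_le_norm _ _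
        _ ≤ (L * ‖(x + t • v) - x‖) * ‖v‖ :=
            mul_le_mul_of_nonneg_right (hL _ _) (norm_nonneg v)
        _ = L * t * ‖v‖ ^ 2 := by
            rw [add_sub_cancel_left, norm_smul, Real.norm_eq_abs, abs_of_pos ht.1]
            ring
    rw [inner_sub_left] at h1
    linarith
  have hkey := hmono (left_mem_Icc.mpr zero_le_one) (right_mem_Icc.mpr zero_le_one) zero_le_one
  have h0 : φ 0 = g x := by simp [hφ]
  have h1 : φ 1 = g (x + v) - ⟪gradient g x, v⟫ - L / 2 * ‖v‖ ^ 2 := by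
    simp only [hφ, one_smul, one_pow, mul_one, one_mul]
  rw [h0, h1] at hkey
  linarith

private lemma cocoercive (g : E → ℝ) {L : ℝ} (hconv : ConvexOn ℝ univ g)
    (hg : Differentiable ℝ g) (hL : ∀ x y, ‖gradient g x - gradient g y‖ ≤ L * ‖x - y‖)
    (hL0 : 0 < L) (x y : E) :
    ‖gradient g x - gradient g y‖ ^ 2
      ≤ 2 * L * (g x - g y - ⟪gradient g y, x - y⟫) := by
  set w := gradient g x - gradient g y with hw
  have hdesc := descent_lemma g hg hL x ((-L⁻¹) • w)
  have hfo := convex_first_order g hconv hg (x + (-L⁻¹) • w) y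
  have e1 : ⟪gradient g x, (-L⁻¹) • w⟫ = -L⁻¹ * ⟪gradient g x, w⟫ :=
    real_inner_smul_right _ _ _
  have e2 : ‖(-L⁻¹) • w‖ ^ 2 = L⁻¹ ^ 2 * ‖w‖ ^ 2 := by
    rw [norm_smul, mul_pow, Real.norm_eq_abs]
    simp [sq_abs]
  have e3 : ⟪gradient g y, (x + (-L⁻¹) • w) - y⟫
      = ⟪gradient g y, x - y⟫ - L⁻¹ * ⟪gradient g y, w⟫ := by
    have hrw : (x + (-L⁻¹) • w) - y = (x - y) + (-L⁻¹) • w := by abel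
    rw [hrw, inner_add_right, real_inner_smul_right]
    ring
  have e4 : ⟪gradient g x, w⟫ - ⟪gradient g y, w⟫ = ‖w‖ ^ 2 := by
    rw [← inner_sub_left, ← hw, real_inner_self_eq_norm_sq]
  rw [e1, e2] at hdesc
  rw [e3] at hfo
  have hne : L ≠ 0 := hL0.ne'
  have h5 : L⁻¹ * ⟪gradient g x, w⟫ - L⁻¹ * ⟪gradient g y, w⟫ = L⁻¹ * ‖w‖ ^ 2 := by
    rw [← mul_sub, e4]
  have hq : L / 2 * (L⁻¹ ^ 2 * ‖w‖ ^ 2) = L⁻¹ / 2 * ‖w‖ ^ 2 := by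
    field_simp
  rw [hq] at hdesc
  have hA : L⁻¹ / 2 * ‖w‖ ^ 2 ≤ g x - g y - ⟪gradient g y, x - y⟫ := by linarith
  have hfin := mul_le_mul_of_nonneg_left hA (by linarith : (0:ℝ) ≤ 2 * L)
  have hid : 2 * L * (L⁻¹ / 2 * ‖w‖ ^ 2) = ‖w‖ ^ 2 := by
    field_simp
  rw [hid] at hfin
  exact hfin

end Aux

/-- For convex `L`-smooth functions `f_1,…,f_n` with `f := (1/n)∑_i f_i` and a
stationary point `x*` of `f` (i.e. `∑_i ∇f_i(x*) = 0`), one has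
`∑_i ‖∇f_i(x) − ∇f_i(x*)‖² ≤ 2Ln(f(x) − f(x*))` for every `x`. -/
theorem sum_sq_grad_diff_le_suboptimality
    (d n : ℕ) (L : ℝ)
    (f : Fin n → EuclideanSpace ℝ (Fin d) → ℝ)
    (hconv : ∀ i, ConvexOn ℝ Set.univ (f i))
    (hdiff : ∀ i, Differentiable ℝ (f i))
    (hL : ∀ i x y, ‖gradient (f i) x - gradient (f i) y‖ ≤ L * ‖x - y‖)
    (xstar : EuclideanSpace ℝ (Fin d))
    (hstar : ∑ i, gradient (f i) xstar = 0) :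
    ∀ x : EuclideanSpace ℝ (Fin d),
      ∑ i, ‖gradient (f i) x - gradient (f i) xstar‖ ^ 2
        ≤ 2 * L * n * ((n : ℝ)⁻¹ * ∑ i, f i x - (n : ℝ)⁻¹ * ∑ i, f i xstar) := by
  intro x
  rcases Nat.eq_zero_or_pos n with hn | hn
  · subst hn; simp
  rcases Nat.eq_zero_or_pos d with hd | hd
  · subst hd
    have hxx : x = xstar := Subsingleton.elim x xstar
    subst hxx
    simp
  have hL0 : 0 ≤ L := by
    have h := hL ⟨0, hn⟩ (EuclideanSpace.single (⟨0, hd⟩ : Fin d) (1 : ℝ)) 0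
    have hnorm : ‖EuclideanSpace.single (⟨0, hd⟩ : Fin d) (1 : ℝ) - 0‖ = 1 := by
      rw [sub_zero, EuclideanSpace.norm_single, norm_one]
    rw [hnorm, mul_one] at h
    exact le_trans (norm_nonneg _) h
  rcases hL0.eq_or_lt with hLeq | hLpos
  · have hz : ∀ i, gradient (f i) x - gradient (f i) xstar = 0 := by
      intro i
      have h := hL i x xstar
      rw [← hLeq, zero_mul] at h
      exact norm_le_zero_iff.mp h
    simp [hz, ← hLeq]
  have key : ∀ i, ‖gradient (f i) x - gradient (f i) xstar‖ ^ 2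
      ≤ 2 * L * (f i x - f i xstar - ⟪gradient (f i) xstar, x - xstar⟫) :=
    fun i => cocoercive (f i) (hconv i) (hdiff i) (hL i) hLpos x xstar
  have hsum := Finset.sum_le_sum (fun i (_ : i ∈ Finset.univ) => key i)
  have hinner : ∑ i, ⟪gradient (f i) xstar, x - xstar⟫ = 0 := by
    rw [← sum_inner, hstar, inner_zero_left]
  have hrhs : ∑ i, 2 * L * (f i x - f i xstar - ⟪gradient (f i) xstar, x - xstar⟫)
      = 2 * L * n * ((n : ℝ)⁻¹ * ∑ i, f i x - (n : ℝ)⁻¹ * ∑ i, f i xstar) := by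
    have hne : (n : ℝ) ≠ 0 := Nat.cast_ne_zero.mpr hn.ne'
    rw [← Finset.mul_sum]
    rw [Finset.sum_sub_distrib, Finset.sum_sub_distrib, hinner, sub_zero]
    field_simp
  calc ∑ i, ‖gradient (f i) x - gradient (f i) xstar‖ ^ 2
      ≤ ∑ i, 2 * L * (f i x - f i xstar - ⟪gradient (f i) xstar, x - xstar⟫) := hsum
    _ = _ := hrhs
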